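/- arXiv:2007.08185 — 7 statements merged into one kernel-verified Lean document; each statement's English description precedes it below -/
import Mathlib

section
/- Let E ∈ ℝ^{3×m} have rank 3 with singular value decomposition E = U_E Σ_E V_Eᵀ, where U_E is a 3×3 orthogonal matrix, V_E ∈ SO(m), and Σ_E ∈ ℝ^{3×m} has positive entries σ₁, σ₂, σ₃ on its main diagonal and zeros elsewhere. Let W = V_E W₀ V_Eᵀ where W₀ ∈ ℝ^{m×m} is diagonal with positive diagonal entries whose first three entries are w₁ = d₁/σ₁², w₂ = d₂/σ₂², w₃ = d₃/σ₃² for some d₁, d₂, d₃ > 0. Then the matrix K = E W Eᵀ is symmetric positive definite and satisfies K = U_E Δ U_Eᵀ with Δ = diag(d₁, d₂, d₃). -/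
open Matrix

/-- Given an SVD `E = U_E Sg V_Eᵀ` of a rank-3 matrix `E ∈ ℝ^{3×m}`
(with `U_E` orthogonal, `V_E ∈ SO(m)`, `Sg` having positive entries `σᵢ` on its main
diagonal and zeros elsewhere), and `W = V_E W₀ V_Eᵀ` with `W₀` diagonal, positive
diagonal, whose first three diagonal entries are `wᵢ = dᵢ/σᵢ²` for `dᵢ > 0`,
the matrix `K = E W Eᵀ` is symmetric positive definite and `K = U_E diag(d₁,d₂,d₃) U_Eᵀ`. -/
theorem wahba_K_posdef_eigendecomposition
    (m : ℕ) (hm : 3 ≤ m)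
    (E : Matrix (Fin 3) (Fin m) ℝ) (hrank : E.rank = 3)
    (U_E : Matrix (Fin 3) (Fin 3) ℝ) (hU : U_Eᵀ * U_E = 1)
    (V_E : Matrix (Fin m) (Fin m) ℝ) (hV : V_Eᵀ * V_E = 1) (hVdet : V_E.det = 1)
    (σ : Fin 3 → ℝ) (hσ : ∀ i, 0 < σ i)
    (Sg : Matrix (Fin 3) (Fin m) ℝ)
    (hSg : ∀ (i : Fin 3) (j : Fin m), Sg i j = if (j : ℕ) = (i : ℕ) then σ i else 0)
    (hSVD : E = U_E * Sg * V_Eᵀ)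
    (w₀ : Fin m → ℝ) (hw₀pos : ∀ j, 0 < w₀ j)
    (d : Fin 3 → ℝ) (hd : ∀ i, 0 < d i)
    (hw₀d : ∀ i : Fin 3, w₀ (Fin.castLE hm i) = d i / (σ i) ^ 2)
    (W : Matrix (Fin m) (Fin m) ℝ) (hW : W = V_E * Matrix.diagonal w₀ * V_Eᵀ)
    (K : Matrix (Fin 3) (Fin 3) ℝ) (hK : K = E * W * Eᵀ) :
    Kᵀ = K ∧ K.PosDef ∧ K = U_E * Matrix.diagonal d * U_Eᵀ := by
  have hVV : V_E * V_Eᵀ = 1 := mul_eq_one_comm.mp hV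
  have hUU : U_E * U_Eᵀ = 1 := mul_eq_one_comm.mp hU
  -- central computation : Sg * diag w₀ * Sgᵀ = diag d
  have hdiag : Sg * Matrix.diagonal w₀ * Sgᵀ = Matrix.diagonal d := by
    ext i j
    rw [Matrix.mul_apply]
    simp only [Matrix.mul_diagonal, Matrix.transpose_apply, hSg]
    rw [Finset.sum_eq_single (Fin.castLE hm i)]
    · have hi : ((Fin.castLE hm i : Fin m) : ℕ) = (i : ℕ) := rfl
      rcases eq_or_ne i j with rfl | hij
      · simp only [hi, if_pos rfl, if_true, Matrix.diagonal_apply_eq, hw₀d]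
        have h2 : (σ i) ^ 2 ≠ 0 := pow_ne_zero _ (hσ i).ne'
        field_simp
        exact mul_div_cancel_left₀ _ (hσ i).ne'
      · have hij' : ((Fin.castLE hm i : Fin m) : ℕ) ≠ (j : ℕ) := by
          simpa [hi, Fin.val_eq_val] using hij
        simp only [hij', if_false, Matrix.diagonal_apply_ne _ hij, zero_mul, mul_zero,
          mul_ite, ite_eq_right_iff]
    · intro k _ hk
      have : (k : ℕ) ≠ (i : ℕ) := by
        intro h
        apply hk
        exact Fin.ext h
      simp [this]
    · intro h
      exact absurd (Finset.mem_univ _) h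
  have hKeq : K = U_E * Matrix.diagonal d * U_Eᵀ := by
    rw [hK, hW, hSVD, Matrix.transpose_mul, Matrix.transpose_mul,
      Matrix.transpose_transpose]
    calc U_E * Sg * V_Eᵀ * (V_E * Matrix.diagonal w₀ * V_Eᵀ) * (V_E * (Sgᵀ * U_Eᵀ))
        = U_E * (Sg * ((V_Eᵀ * V_E) * Matrix.diagonal w₀ * (V_Eᵀ * V_E)) * Sgᵀ) * U_Eᵀ := by
          simp only [Matrix.mul_assoc]
      _ = U_E * (Sg * Matrix.diagonal w₀ * Sgᵀ) * U_Eᵀ := by rw [hV]; simp [Matrix.mul_assoc]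
      _ = U_E * Matrix.diagonal d * U_Eᵀ := by rw [hdiag]
  have hDpos : (Matrix.diagonal d).PosDef := Matrix.posDef_diagonal_iff.mpr hd
  have hsym : Kᵀ = K := by
    rw [hKeq]
    simp [Matrix.transpose_mul, Matrix.diagonal_transpose, Matrix.mul_assoc]
  refine ⟨hsym, Matrix.posDef_iff_dotProduct_mulVec.mpr ⟨?_, ?_⟩, hKeq⟩
  · -- Hermitian
    rw [Matrix.IsHermitian, Matrix.conjTranspose_eq_transpose_of_trivial, hsym]
  · intro x hx
    have hxne : U_Eᵀ *ᵥ x ≠ 0 := by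
      intro h
      apply hx
      have : U_E *ᵥ (U_Eᵀ *ᵥ x) = U_E *ᵥ 0 := by rw [h]
      rwa [Matrix.mulVec_mulVec, hUU, Matrix.one_mulVec, Matrix.mulVec_zero] at this
    have := hDpos.dotProduct_mulVec_pos hxne
    simp only [RCLike.re_to_real, star_trivial] at this ⊢
    rw [hKeq, ← Matrix.mulVec_mulVec, ← Matrix.mulVec_mulVec,
      Matrix.dotProduct_mulVec x U_E, ← Matrix.mulVec_transpose]
    exact this
end

section
/- Let U_E be a 3×3 real orthogonal matrix and let a₁, a₂, a₃ denote the columns of the 3×3 identity matrix. For each i ∈ {1,2,3}, the matrix Qⁱ := 2 U_E aᵢ aᵢᵀ U_Eᵀ − I belongs to SO(3); moreover, for K = U_E diag(d₁, d₂, d₃) U_Eᵀ with d₁, d₂, d₃ > 0, each Qⁱ satisfies K (Qⁱ)ᵀ = Qⁱ K, i.e., each Qⁱ is a critical point of the map Q ↦ ⟨I − Q, K⟩ on SO(3). -/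
open Matrix

/-- For a 3×3 orthogonal matrix `U_E`, with `aᵢ` the columns of the
identity matrix, each `Qⁱ = 2 U_E aᵢ aᵢᵀ U_Eᵀ − I` belongs to SO(3), and for
`K = U_E diag(d₁,d₂,d₃) U_Eᵀ` with `dᵢ > 0`, each `Qⁱ` satisfies `K (Qⁱ)ᵀ = Qⁱ K`,
i.e. each `Qⁱ` is a critical point of `Q ↦ ⟨I − Q, K⟩` on SO(3). -/
theorem wahba_nontrivial_critical_points
    (U_E : Matrix (Fin 3) (Fin 3) ℝ) (hU : U_Eᵀ * U_E = 1)
    (d : Fin 3 → ℝ) (hd : ∀ i, 0 < d i)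
    (K : Matrix (Fin 3) (Fin 3) ℝ) (hK : K = U_E * Matrix.diagonal d * U_Eᵀ)
    (a : Fin 3 → Fin 3 → ℝ) (ha : ∀ i j, a i j = (1 : Matrix (Fin 3) (Fin 3) ℝ) j i)
    (Q : Fin 3 → Matrix (Fin 3) (Fin 3) ℝ)
    (hQ : ∀ i, Q i = (2 : ℝ) • (U_E * Matrix.vecMulVec (a i) (a i) * U_Eᵀ) - 1) :
    ∀ i : Fin 3, ((Q i)ᵀ * Q i = 1 ∧ (Q i).det = 1) ∧ K * (Q i)ᵀ = Q i * K := by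
  intro i
  have hUU : U_E * U_Eᵀ = 1 := mul_eq_one_comm.mp hU
  set e : Fin 3 → ℝ := fun j => if j = i then 1 else -1 with he
  have hPdiag : Matrix.vecMulVec (a i) (a i)
      = Matrix.diagonal (fun j => if j = i then (1:ℝ) else 0) := by
    ext j k
    simp only [Matrix.vecMulVec_apply, ha, Matrix.one_apply, Matrix.diagonal_apply]
    by_cases hj : j = i <;> by_cases hk : k = i <;> simp [hj, hk]
    · exact (fun h => hk h.symm)
  have key : Matrix.diagonal e
      = (2:ℝ) • Matrix.diagonal (fun j => if j = i then (1:ℝ) else 0) - 1 := by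
    ext j k
    by_cases hj : j = k
    · subst hj
      by_cases hji : j = i <;>
        simp [Matrix.diagonal_apply, Matrix.one_apply, hji, he] <;> norm_num
    · simp [Matrix.diagonal_apply, Matrix.one_apply, hj]
  have hQ' : Q i = U_E * Matrix.diagonal e * U_Eᵀ := by
    rw [hQ i, hPdiag, key]
    simp [Matrix.mul_sub, Matrix.sub_mul, Matrix.mul_smul, Matrix.smul_mul, hUU,
      Matrix.mul_assoc]
  have hQT : (Q i)ᵀ = Q i := by
    rw [hQ']
    simp [Matrix.transpose_mul, Matrix.diagonal_transpose, Matrix.mul_assoc]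
  have hee : (fun j => e j * e j) = fun _ => (1:ℝ) := by
    funext j; by_cases hji : j = i <;> simp [he, hji]
  have h1 : (Q i)ᵀ * Q i = 1 := by
    rw [hQT, hQ']
    calc U_E * Matrix.diagonal e * U_Eᵀ * (U_E * Matrix.diagonal e * U_Eᵀ)
        = U_E * Matrix.diagonal e * (U_Eᵀ * U_E) * Matrix.diagonal e * U_Eᵀ := by
          simp [Matrix.mul_assoc]
      _ = U_E * (Matrix.diagonal e * Matrix.diagonal e) * U_Eᵀ := by
          rw [hU]; simp [Matrix.mul_assoc]
      _ = 1 := by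
          rw [Matrix.diagonal_mul_diagonal, hee]
          simpa using hUU
  have hdet : (Q i).det = 1 := by
    have hprod : ∏ j, e j = 1 := by
      fin_cases i <;> simp [he, Fin.prod_univ_three]
    rw [hQ', Matrix.det_mul, Matrix.det_mul, Matrix.det_diagonal, hprod, mul_one,
      ← Matrix.det_mul, hUU, Matrix.det_one]
  have hcomm : K * (Q i)ᵀ = Q i * K := by
    rw [hQT, hQ', hK]
    calc U_E * Matrix.diagonal d * U_Eᵀ * (U_E * Matrix.diagonal e * U_Eᵀ)
        = U_E * Matrix.diagonal d * (U_Eᵀ * U_E) * Matrix.diagonal e * U_Eᵀ := by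
          simp [Matrix.mul_assoc]
      _ = U_E * (Matrix.diagonal d * Matrix.diagonal e) * U_Eᵀ := by
          rw [hU]; simp [Matrix.mul_assoc]
      _ = U_E * (Matrix.diagonal e * Matrix.diagonal d) * U_Eᵀ := by
          rw [Matrix.diagonal_mul_diagonal, Matrix.diagonal_mul_diagonal]
          have hde : (fun j => d j * e j) = fun j => e j * d j := by
            funext j; ring
          rw [hde]
      _ = U_E * Matrix.diagonal e * (U_Eᵀ * U_E) * Matrix.diagonal d * U_Eᵀ := by
          rw [hU]; simp [Matrix.mul_assoc]
      _ = U_E * Matrix.diagonal e * U_Eᵀ * (U_E * Matrix.diagonal d * U_Eᵀ) := by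
          simp [Matrix.mul_assoc]
  exact ⟨⟨h1, hdet⟩, hcomm⟩
end

section
/- Let K = U_E Δ U_Eᵀ where U_E is a 3×3 real orthogonal matrix and Δ = diag(d₁, d₂, d₃) with d₁, d₂, d₃ > 0 pairwise distinct (dᵢ ≠ dⱼ for i ≠ j). Let a₁, a₂, a₃ denote the columns of the 3×3 identity matrix and set Qⁱ := 2 U_E aᵢ aᵢᵀ U_Eᵀ − I for i = 1, 2, 3. Then for Q ∈ SO(3), the equation KQᵀ = QK holds if and only if Q ∈ {I, Q¹, Q², Q³}. -/
open Matrix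

lemma wahba_diag_core (d : Fin 3 → ℝ) (hd : ∀ i, 0 < d i)
    (hdist : ∀ i j : Fin 3, i ≠ j → d i ≠ d j)
    (P : Matrix (Fin 3) (Fin 3) ℝ) (hP : Pᵀ * P = 1) (hdet : P.det = 1)
    (h : Matrix.diagonal d * Pᵀ = P * Matrix.diagonal d) :
    P = 1 ∨ ∃ i : Fin 3, P = Matrix.diagonal (fun j => if j = i then (1:ℝ) else -1) := by
  set D := Matrix.diagonal d with hD
  have hPDP : P * D * P = D := by
    calc P * D * P = D * Pᵀ * P := by rw [h]
    _ = D * (Pᵀ * P) := by rw [Matrix.mul_assoc]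
    _ = D := by rw [hP, Matrix.mul_one]
  have hPtD : Pᵀ * D = D * P := by
    calc Pᵀ * D = Pᵀ * (P * D * P) := by rw [hPDP]
    _ = (Pᵀ * P) * D * P := by noncomm_ring
    _ = D * P := by rw [hP, Matrix.one_mul]
  have hcomm : P * (D * D) = (D * D) * P := by
    calc P * (D * D) = (P * D) * D := by rw [Matrix.mul_assoc]
    _ = D * Pᵀ * D := by rw [h]
    _ = D * (Pᵀ * D) := by rw [Matrix.mul_assoc]
    _ = D * (D * P) := by rw [hPtD]
    _ = (D * D) * P := by rw [Matrix.mul_assoc]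
  have hoff : ∀ i j : Fin 3, i ≠ j → P i j = 0 := by
    intro i j hij
    have h5 := congrFun (congrFun hcomm i) j
    rw [hD, Matrix.diagonal_mul_diagonal, Matrix.mul_diagonal, Matrix.diagonal_mul] at h5
    have h4 : P i j * (d j * d j - d i * d i) = 0 := by linear_combination h5
    rcases mul_eq_zero.mp h4 with h0 | h0
    · exact h0
    · exfalso
      have h1 := hdist i j hij
      have h2 := (hd i).le
      have h3 := (hd j).le
      exact h1 (by nlinarith)
  have hdiag : ∀ i : Fin 3, P i i = 1 ∨ P i i = -1 := by
    intro i
    have h1 : (Pᵀ * P) i i = P i i * P i i := by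
      rw [Matrix.mul_apply]
      apply Finset.sum_eq_single_of_mem i (Finset.mem_univ i)
      intro k _ hk
      rw [Matrix.transpose_apply, hoff k i hk, zero_mul]
    rw [hP, Matrix.one_apply_eq] at h1
    exact mul_self_eq_one_iff.mp h1.symm
  rw [Matrix.det_fin_three] at hdet
  rw [hoff 0 1 (by decide), hoff 0 2 (by decide), hoff 1 0 (by decide),
      hoff 1 2 (by decide), hoff 2 0 (by decide), hoff 2 1 (by decide)] at hdet
  rcases hdiag 0 with h0 | h0 <;> rcases hdiag 1 with h1 | h1 <;> rcases hdiag 2 with h2 | h2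
  · left
    ext i j
    fin_cases i <;> fin_cases j <;>
      simp_all [Matrix.one_apply, hoff 0 1 (by decide), hoff 0 2 (by decide),
        hoff 1 0 (by decide), hoff 1 2 (by decide), hoff 2 0 (by decide), hoff 2 1 (by decide)]
  · exfalso; rw [h0, h1, h2] at hdet; norm_num at hdet
  · exfalso; rw [h0, h1, h2] at hdet; norm_num at hdet
  · right; exact ⟨0, by
      ext i j
      fin_cases i <;> fin_cases j <;>
        simp_all [Matrix.diagonal_apply, hoff 0 1 (by decide), hoff 0 2 (by decide),
          hoff 1 0 (by decide), hoff 1 2 (by decide), hoff 2 0 (by decide), hoff 2 1 (by decide)]⟩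
  · exfalso; rw [h0, h1, h2] at hdet; norm_num at hdet
  · right; exact ⟨1, by
      ext i j
      fin_cases i <;> fin_cases j <;>
        simp_all [Matrix.diagonal_apply, hoff 0 1 (by decide), hoff 0 2 (by decide),
          hoff 1 0 (by decide), hoff 1 2 (by decide), hoff 2 0 (by decide), hoff 2 1 (by decide)]⟩
  · right; exact ⟨2, by
      ext i j
      fin_cases i <;> fin_cases j <;>
        simp_all [Matrix.diagonal_apply, hoff 0 1 (by decide), hoff 0 2 (by decide),
          hoff 1 0 (by decide), hoff 1 2 (by decide), hoff 2 0 (by decide), hoff 2 1 (by decide)]⟩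
  · exfalso; rw [h0, h1, h2] at hdet; norm_num at hdet


/-- For `K = U_E diag(d₁,d₂,d₃) U_Eᵀ` with `U_E` orthogonal and
`d₁,d₂,d₃ > 0` pairwise distinct, and `Qⁱ = 2 U_E aᵢ aᵢᵀ U_Eᵀ − I` (with `aᵢ` the
columns of the identity), a matrix `Q ∈ SO(3)` satisfies `K Qᵀ = Q K` if and only
if `Q ∈ {I, Q¹, Q², Q³}`. -/
theorem wahba_critical_points_characterization
    (U_E : Matrix (Fin 3) (Fin 3) ℝ) (hU : U_Eᵀ * U_E = 1)
    (d : Fin 3 → ℝ) (hd : ∀ i, 0 < d i)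
    (hdist : ∀ i j : Fin 3, i ≠ j → d i ≠ d j)
    (K : Matrix (Fin 3) (Fin 3) ℝ) (hK : K = U_E * Matrix.diagonal d * U_Eᵀ)
    (a : Fin 3 → Fin 3 → ℝ) (ha : ∀ i j, a i j = (1 : Matrix (Fin 3) (Fin 3) ℝ) j i)
    (Qc : Fin 3 → Matrix (Fin 3) (Fin 3) ℝ)
    (hQc : ∀ i, Qc i = (2 : ℝ) • (U_E * Matrix.vecMulVec (a i) (a i) * U_Eᵀ) - 1)
    (Q : Matrix (Fin 3) (Fin 3) ℝ) (hQ : Qᵀ * Q = 1) (hQdet : Q.det = 1) :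
    K * Qᵀ = Q * K ↔ (Q = 1 ∨ ∃ i : Fin 3, Q = Qc i) := by
  have hUU : U_E * U_Eᵀ = 1 := mul_eq_one_comm.mp hU
  have hQQ : Q * Qᵀ = 1 := mul_eq_one_comm.mp hQ
  have c1 : ∀ X : Matrix (Fin 3) (Fin 3) ℝ, U_E * (U_Eᵀ * X) = X := fun X => by
    rw [← Matrix.mul_assoc, hUU, Matrix.one_mul]
  have c2 : ∀ X : Matrix (Fin 3) (Fin 3) ℝ, U_Eᵀ * (U_E * X) = X := fun X => by
    rw [← Matrix.mul_assoc, hU, Matrix.one_mul]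
  have c3 : ∀ X : Matrix (Fin 3) (Fin 3) ℝ, Q * (Qᵀ * X) = X := fun X => by
    rw [← Matrix.mul_assoc, hQQ, Matrix.one_mul]
  have c4 : ∀ X : Matrix (Fin 3) (Fin 3) ℝ, Qᵀ * (Q * X) = X := fun X => by
    rw [← Matrix.mul_assoc, hQ, Matrix.one_mul]
  set P : Matrix (Fin 3) (Fin 3) ℝ := U_Eᵀ * Q * U_E with hPdef
  have hQP : Q = U_E * P * U_Eᵀ := by
    rw [hPdef]; simp only [Matrix.mul_assoc, c1, c2]
    rw [hUU, Matrix.mul_one]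
  have hPt : Pᵀ = U_Eᵀ * Qᵀ * U_E := by
    rw [hPdef]; simp [Matrix.transpose_mul, Matrix.mul_assoc]
  have hPorth : Pᵀ * P = 1 := by
    rw [hPt, hPdef]
    simp only [Matrix.mul_assoc, c1, c2, c3, c4]
    exact hU
  have hPdet : P.det = 1 := by
    have hdU : U_Eᵀ.det * U_E.det = 1 := by rw [← Matrix.det_mul, hU, Matrix.det_one]
    rw [hPdef, Matrix.det_mul, Matrix.det_mul, hQdet]
    linear_combination hdU
  have conj_inj : ∀ A B : Matrix (Fin 3) (Fin 3) ℝ,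
      U_E * A * U_Eᵀ = U_E * B * U_Eᵀ → A = B := by
    intro A B hAB
    have h2 := congrArg (fun M => U_Eᵀ * (M * U_E)) hAB
    simpa only [Matrix.mul_assoc, c1, c2, Matrix.mul_one,
      show ∀ X : Matrix (Fin 3) (Fin 3) ℝ, X * U_Eᵀ * U_E = X from fun X => by
        rw [Matrix.mul_assoc, hU, Matrix.mul_one]] using h2
  have key : K * Qᵀ = Q * K ↔ Matrix.diagonal d * Pᵀ = P * Matrix.diagonal d := by
    have lhs_eq : U_E * (Matrix.diagonal d * Pᵀ) * U_Eᵀ = K * Qᵀ := by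
      rw [hK, hPt]
      simp only [Matrix.mul_assoc, c1, c2, hUU, hU, Matrix.mul_one]
    have rhs_eq : U_E * (P * Matrix.diagonal d) * U_Eᵀ = Q * K := by
      rw [hK, hPdef]
      simp only [Matrix.mul_assoc, c1, c2, hUU, hU, Matrix.mul_one]
    constructor
    · intro h
      apply conj_inj
      rw [lhs_eq, rhs_eq, h]
    · intro h
      rw [← lhs_eq, ← rhs_eq, h]
  have hvmv : ∀ i, Matrix.vecMulVec (a i) (a i) = Matrix.diagonal (a i) := by
    intro i
    ext j k
    rw [Matrix.vecMulVec_apply, Matrix.diagonal_apply]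
    simp only [ha, Matrix.one_apply]
    by_cases hjk : j = k
    · subst hjk; by_cases hji : j = i <;> simp [hji]
    · rw [if_neg hjk]
      by_cases hji : j = i
      · subst hji
        rw [if_neg (fun h : k = j => hjk (h.symm)), mul_zero]
      · rw [if_neg hji, zero_mul]
  have hQcP : ∀ i, Qc i = U_E * Matrix.diagonal (fun j => if j = i then (1:ℝ) else -1) * U_Eᵀ := by
    intro i
    rw [hQc i, hvmv i]
    have hdd : Matrix.diagonal (fun j => if j = i then (1:ℝ) else -1)
        = (2:ℝ) • Matrix.diagonal (a i) - 1 := by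
      ext j k
      rw [Matrix.sub_apply, Matrix.smul_apply, Matrix.diagonal_apply, Matrix.diagonal_apply,
        Matrix.one_apply]
      by_cases hjk : j = k
      · rw [if_pos hjk, if_pos hjk, if_pos hjk, ha, Matrix.one_apply]
        by_cases hji : j = i <;> simp [hji] <;> norm_num
      · rw [if_neg hjk, if_neg hjk, if_neg hjk]; simp
    rw [hdd, Matrix.mul_sub, Matrix.sub_mul, Matrix.mul_one, hUU, Matrix.mul_smul,
      Matrix.smul_mul]
  constructor
  · intro h
    rcases wahba_diag_core d hd hdist P hPorth hPdet (key.mp h) with hP1 | ⟨i, hPi⟩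
    · left; rw [hQP, hP1, Matrix.mul_one, hUU]
    · right; exact ⟨i, by rw [hQP, hPi, hQcP i]⟩
  · intro h
    apply key.mpr
    rcases h with h1 | ⟨i, hi⟩
    · have hp : P = 1 := conj_inj P 1 (by rw [← hQP, h1, Matrix.mul_one, hUU])
      rw [hp]; simp
    · have hp : P = Matrix.diagonal (fun j => if j = i then (1:ℝ) else -1) :=
        conj_inj _ _ (by rw [← hQP, hi, hQcP i])
      rw [hp, Matrix.diagonal_transpose, Matrix.diagonal_mul_diagonal,
        Matrix.diagonal_mul_diagonal]
      exact congrArg Matrix.diagonal (funext fun j => mul_comm _ _)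
end

section
/- Let K be a 3×3 real symmetric positive definite matrix. Then for every Q ∈ SO(3), ⟨I − Q, K⟩ = trace(K) − trace(KQ) ≥ 0, with equality if and only if Q = I. Consequently the identity matrix is the unique global minimizer of the map Q ↦ ⟨I − Q, K⟩ on SO(3). -/
open Matrix

private lemma trace_tmul_self (N : Matrix (Fin 3) (Fin 3) ℝ) :
    (Nᵀ * N).trace = ∑ j, ∑ i, (N i j)^2 := by
  simp [Matrix.trace, Matrix.diag, Matrix.mul_apply, sq]

/-- For a 3×3 symmetric positive definite matrix `K` and any `Q ∈ SO(3)`,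
`⟨I − Q, K⟩ = trace(K) − trace(KQ) ≥ 0`, with equality iff `Q = I`; consequently the
identity is the unique global minimizer of `Q ↦ ⟨I − Q, K⟩` on SO(3). -/
theorem wahba_identity_unique_global_minimizer
    (K : Matrix (Fin 3) (Fin 3) ℝ) (hsym : Kᵀ = K) (hpd : K.PosDef) :
    (∀ Q : Matrix (Fin 3) (Fin 3) ℝ, Qᵀ * Q = 1 → Q.det = 1 →
      ((1 - Q)ᵀ * K).trace = K.trace - (K * Q).trace ∧
      0 ≤ K.trace - (K * Q).trace ∧
      (K.trace - (K * Q).trace = 0 ↔ Q = 1)) ∧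
    (∀ Q : Matrix (Fin 3) (Fin 3) ℝ, Qᵀ * Q = 1 → Q.det = 1 → Q ≠ 1 →
      ((1 - (1 : Matrix (Fin 3) (Fin 3) ℝ))ᵀ * K).trace < ((1 - Q)ᵀ * K).trace) := by
  -- the square root of K
  obtain ⟨A, hAsym, hAmul, hAdet⟩ :
      ∃ A : Matrix (Fin 3) (Fin 3) ℝ, Aᵀ = A ∧ A * A = K ∧ A.det ≠ 0 := by
    open scoped MatrixOrder in
    refine ⟨CFC.sqrt K, ?_, CFC.sqrt_mul_sqrt_self K hpd.posSemidef.nonneg, ?_⟩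
    · have := (CFC.sqrt_nonneg K).posSemidef.1
      rwa [Matrix.IsHermitian, Matrix.conjTranspose_eq_transpose_of_trivial] at this
    · intro h
      have : K.det = 0 := by
        open scoped MatrixOrder in
        rw [← CFC.sqrt_mul_sqrt_self K hpd.posSemidef.nonneg, Matrix.det_mul, h, mul_zero]
      exact (ne_of_gt hpd.det_pos) this
  have key : ∀ Q : Matrix (Fin 3) (Fin 3) ℝ, Qᵀ * Q = 1 → Q.det = 1 →
      ((1 - Q)ᵀ * K).trace = K.trace - (K * Q).trace ∧
      0 ≤ K.trace - (K * Q).trace ∧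
      (K.trace - (K * Q).trace = 0 ↔ Q = 1) := by
    intro Q hQ _
    have hQQt : Q * Qᵀ = 1 := by
      rw [mul_eq_one_comm] at hQ; exact hQ
    have htQK : (Qᵀ * K).trace = (K * Q).trace := by
      rw [← Matrix.trace_transpose (Qᵀ * K), Matrix.transpose_mul,
        Matrix.transpose_transpose, hsym]
    have h1 : ((1 - Q)ᵀ * K).trace = K.trace - (K * Q).trace := by
      rw [Matrix.transpose_sub, Matrix.transpose_one, sub_mul, one_mul,
        Matrix.trace_sub, htQK]
    -- the key identity: trace((A - A*Q)ᵀ * (A - A*Q)) = 2*(trace K - trace (K*Q))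
    set N : Matrix (Fin 3) (Fin 3) ℝ := A - A * Q with hN
    have hNt : Nᵀ * N = K - K * Q - Qᵀ * K + Qᵀ * K * Q := by
      have e1 : A * (A * Q) = K * Q := by rw [← Matrix.mul_assoc, hAmul]
      have e2 : Qᵀ * A * A = Qᵀ * K := by rw [Matrix.mul_assoc, hAmul]
      have e3 : Qᵀ * A * (A * Q) = Qᵀ * K * Q := by
        rw [Matrix.mul_assoc Qᵀ A, ← Matrix.mul_assoc A A, hAmul,
          ← Matrix.mul_assoc]
      rw [hN, Matrix.transpose_sub, Matrix.transpose_mul, hAsym,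
        sub_mul, mul_sub, mul_sub, e1, e2, e3, hAmul]
      abel
    have htr : (Nᵀ * N).trace = 2 * (K.trace - (K * Q).trace) := by
      have h2 : (Qᵀ * K * Q).trace = K.trace := by
        rw [Matrix.trace_mul_cycle, hQQt, one_mul]
      rw [hNt, Matrix.trace_add, Matrix.trace_sub, Matrix.trace_sub, htQK, h2]
      ring
    have hnn : 0 ≤ (Nᵀ * N).trace := by
      rw [trace_tmul_self]
      positivity
    refine ⟨h1, by linarith, ?_, ?_⟩
    · intro h0
      have hN0 : N = 0 := by
        have : (Nᵀ * N).trace = 0 := by rw [htr, h0]; ring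
        rw [trace_tmul_self] at this
        ext i j
        have hj := (Finset.sum_eq_zero_iff_of_nonneg (fun j _ => by positivity)).mp
          this j (Finset.mem_univ j)
        have hi := (Finset.sum_eq_zero_iff_of_nonneg (fun i _ => by positivity)).mp
          hj i (Finset.mem_univ i)
        simpa using pow_eq_zero_iff (n := 2) (by norm_num) |>.mp hi
      have hAQ : A * Q = A := by
        rw [hN] at hN0
        exact (sub_eq_zero.mp hN0).symm
      calc Q = 1 * Q := (one_mul Q).symm
        _ = (A⁻¹ * A) * Q := by rw [Matrix.nonsing_inv_mul A hAdet.isUnit]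
        _ = A⁻¹ * (A * Q) := by rw [Matrix.mul_assoc]
        _ = A⁻¹ * A := by rw [hAQ]
        _ = 1 := Matrix.nonsing_inv_mul A hAdet.isUnit
    · intro h; subst h; simp
  refine ⟨key, ?_⟩
  intro Q hQ hdet hne
  obtain ⟨h1, h2, h3⟩ := key Q hQ hdet
  have h0 : ((1 - (1 : Matrix (Fin 3) (Fin 3) ℝ))ᵀ * K).trace = 0 := by simp
  rw [h0, h1]
  rcases h2.lt_or_eq with h | h
  · exact h
  · exact absurd (h3.mp h.symm) hne
end

section
/- Let K = U_E diag(d₁, d₂, d₃) U_Eᵀ where U_E is a 3×3 real orthogonal matrix and d₁, d₂, d₃ > 0. Let i* ∈ {1,2,3} be an index with d_{i*} = min{d₁, d₂, d₃}, let a_{i*} be the i*-th column of the identity matrix, and set Q^{i*} := 2 U_E a_{i*} a_{i*}ᵀ U_Eᵀ − I. Then for every Q ∈ SO(3), ⟨I − Q, K⟩ ≤ 2(d₁ + d₂ + d₃ − d_{i*}), and equality holds at Q = Q^{i*}; i.e., the map Q ↦ ⟨I − Q, K⟩ attains its global maximum on SO(3) at Q^{i*}, with maximum value twice the sum of the two largest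 dᵢ. -/
open Matrix

lemma so3_diag (R : Matrix (Fin 3) (Fin 3) ℝ) (h : Rᵀ * R = 1) (hdet : R.det = 1) :
    (-1 ≤ R 0 0 + R 1 1 + R 2 2) ∧
    (-1 ≤ R 0 0 ∧ R 0 0 ≤ 1) ∧ (-1 ≤ R 1 1 ∧ R 1 1 ≤ 1) ∧ (-1 ≤ R 2 2 ∧ R 2 2 ≤ 1) := by
  have hR : R * Rᵀ = 1 := mul_eq_one_comm.mp h
  have hadj : R.adjugate = Rᵀ := by
    calc R.adjugate = R.adjugate * (R * Rᵀ) := by rw [hR, Matrix.mul_one]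
    _ = (R.adjugate * R) * Rᵀ := by rw [Matrix.mul_assoc]
    _ = Rᵀ := by rw [Matrix.adjugate_mul, hdet, one_smul, Matrix.one_mul]
  rw [Matrix.adjugate_fin_three] at hadj
  have c0 : R 1 1 * R 2 2 - R 1 2 * R 2 1 = R 0 0 := by
    have := congrFun (congrFun hadj 0) 0; simpa using this
  have c1 : R 0 0 * R 2 2 - R 0 2 * R 2 0 = R 1 1 := by
    have := congrFun (congrFun hadj 1) 1; simpa using this
  have c2 : R 0 0 * R 1 1 - R 0 1 * R 1 0 = R 2 2 := by
    have := congrFun (congrFun hadj 2) 2; simpa using this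
  have col : ∀ j, R 0 j ^ 2 + R 1 j ^ 2 + R 2 j ^ 2 = 1 := by
    intro j
    have := congrFun (congrFun h j) j
    simp [Matrix.mul_apply, Fin.sum_univ_three, Matrix.one_apply] at this
    nlinarith [this]
  have row : ∀ i, R i 0 ^ 2 + R i 1 ^ 2 + R i 2 ^ 2 = 1 := by
    intro i
    have := congrFun (congrFun hR i) i
    simp [Matrix.mul_apply, Fin.sum_univ_three, Matrix.one_apply] at this
    nlinarith [this]
  have hb0 : -1 ≤ R 0 0 ∧ R 0 0 ≤ 1 := by
    constructor <;>
      nlinarith [col 0, sq_nonneg (R 1 0), sq_nonneg (R 2 0), sq_nonneg (R 0 0 - 1),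
        sq_nonneg (R 0 0 + 1)]
  have hb1 : -1 ≤ R 1 1 ∧ R 1 1 ≤ 1 := by
    constructor <;>
      nlinarith [col 1, sq_nonneg (R 0 1), sq_nonneg (R 2 1), sq_nonneg (R 1 1 - 1),
        sq_nonneg (R 1 1 + 1)]
  have hb2 : -1 ≤ R 2 2 ∧ R 2 2 ≤ 1 := by
    constructor <;>
      nlinarith [col 2, sq_nonneg (R 0 2), sq_nonneg (R 1 2), sq_nonneg (R 2 2 - 1),
        sq_nonneg (R 2 2 + 1)]
  refine ⟨?_, hb0, hb1, hb2⟩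
  have id0 : (1 + (R 0 0 + R 1 1 + R 2 2)) * (1 + R 0 0 - R 1 1 - R 2 2)
      = (R 2 1 - R 1 2) ^ 2 := by
    linear_combination col 0 - row 1 - row 2 - 2 * c0
  have id1 : (1 + (R 0 0 + R 1 1 + R 2 2)) * (1 + R 1 1 - R 0 0 - R 2 2)
      = (R 0 2 - R 2 0) ^ 2 := by
    linear_combination col 1 - row 0 - row 2 - 2 * c1
  have id2 : (1 + (R 0 0 + R 1 1 + R 2 2)) * (1 + R 2 2 - R 0 0 - R 1 1)
      = (R 1 0 - R 0 1) ^ 2 := by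
    linear_combination col 2 - row 0 - row 1 - 2 * c2
  by_contra hlt
  push_neg at hlt
  have h0 : 1 + R 0 0 - R 1 1 - R 2 2 ≤ 0 := by nlinarith [sq_nonneg (R 2 1 - R 1 2)]
  have h1 : 1 + R 1 1 - R 0 0 - R 2 2 ≤ 0 := by nlinarith [sq_nonneg (R 0 2 - R 2 0)]
  have h2 : 1 + R 2 2 - R 0 0 - R 1 1 ≤ 0 := by nlinarith [sq_nonneg (R 1 0 - R 0 1)]
  linarith

/-- For `K = U_E diag(d₁,d₂,d₃) U_Eᵀ` with `U_E` orthogonal and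
`dᵢ > 0`, and `i*` an index achieving the minimum of the `dᵢ`, the map
`Q ↦ ⟨I − Q, K⟩` on SO(3) is bounded above by `2(d₁+d₂+d₃−d_{i*})`, and this
bound is attained at `Q^{i*} = 2 U_E a_{i*} a_{i*}ᵀ U_Eᵀ − I`. -/
theorem wahba_global_maximum
    (U_E : Matrix (Fin 3) (Fin 3) ℝ) (hU : U_Eᵀ * U_E = 1)
    (d : Fin 3 → ℝ) (hd : ∀ i, 0 < d i)
    (K : Matrix (Fin 3) (Fin 3) ℝ) (hK : K = U_E * Matrix.diagonal d * U_Eᵀ)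
    (istar : Fin 3) (hmin : ∀ j, d istar ≤ d j)
    (a : Fin 3 → ℝ) (ha : ∀ j, a j = (1 : Matrix (Fin 3) (Fin 3) ℝ) j istar)
    (Qstar : Matrix (Fin 3) (Fin 3) ℝ)
    (hQstar : Qstar = (2 : ℝ) • (U_E * Matrix.vecMulVec a a * U_Eᵀ) - 1) :
    (∀ Q : Matrix (Fin 3) (Fin 3) ℝ, Qᵀ * Q = 1 → Q.det = 1 →
      ((1 - Q)ᵀ * K).trace ≤ 2 * (d 0 + d 1 + d 2 - d istar)) ∧
    ((1 - Qstar)ᵀ * K).trace = 2 * (d 0 + d 1 + d 2 - d istar) := by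
  have hUUt : U_E * U_Eᵀ = 1 := mul_eq_one_comm.mp hU
  have hdU : U_E.det * U_E.det = 1 := by
    have := congrArg Matrix.det hU
    simpa [Matrix.det_mul, Matrix.det_transpose] using this
  have htrK : K.trace = d 0 + d 1 + d 2 := by
    rw [hK, Matrix.trace_mul_cycle, hU, Matrix.one_mul, Matrix.trace_diagonal,
      Fin.sum_univ_three]
  have key : ∀ M : Matrix (Fin 3) (Fin 3) ℝ, (Mᵀ * K).trace =
      (U_Eᵀ * (Mᵀ * U_E)) 0 0 * d 0 + (U_Eᵀ * (Mᵀ * U_E)) 1 1 * d 1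
        + (U_Eᵀ * (Mᵀ * U_E)) 2 2 * d 2 := by
    intro M
    have e1 : Mᵀ * K = (Mᵀ * (U_E * Matrix.diagonal d)) * U_Eᵀ := by
      rw [hK, ← Matrix.mul_assoc]
    rw [e1, Matrix.trace_mul_comm]
    have e2 : U_Eᵀ * (Mᵀ * (U_E * Matrix.diagonal d))
        = (U_Eᵀ * (Mᵀ * U_E)) * Matrix.diagonal d := by
      simp only [Matrix.mul_assoc]
    rw [e2]
    simp [Matrix.trace, Matrix.diag, Matrix.mul_diagonal, Fin.sum_univ_three]
  constructor
  · intro Q hQ hQdet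
    have hQQt : Q * Qᵀ = 1 := mul_eq_one_comm.mp hQ
    have hsub : (1 - Q)ᵀ * K = K - Qᵀ * K := by
      simp [Matrix.transpose_sub, Matrix.sub_mul]
    rw [hsub, Matrix.trace_sub, htrK, key Q]
    set P := U_Eᵀ * (Qᵀ * U_E) with hPdef
    have hPo : Pᵀ * P = 1 := by
      simp only [hPdef, Matrix.transpose_mul, Matrix.transpose_transpose, Matrix.mul_assoc]
      rw [← Matrix.mul_assoc U_E U_Eᵀ, hUUt, Matrix.one_mul, ← Matrix.mul_assoc Q Qᵀ,
        hQQt, Matrix.one_mul, hU]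
    have hPdet : P.det = 1 := by
      simp only [hPdef, Matrix.det_mul, Matrix.det_transpose, hQdet]
      linear_combination hdU
    obtain ⟨htr, ⟨hl0, hb0⟩, ⟨hl1, hb1⟩, ⟨hl2, hb2⟩⟩ := so3_diag P hPo hPdet
    have hm0 := hmin 0; have hm1 := hmin 1; have hm2 := hmin 2
    have hdm := hd istar
    nlinarith [mul_nonneg (sub_nonneg.2 hm0) (by linarith : (0:ℝ) ≤ 1 + P 0 0),
      mul_nonneg (sub_nonneg.2 hm1) (by linarith : (0:ℝ) ≤ 1 + P 1 1),
      mul_nonneg (sub_nonneg.2 hm2) (by linarith : (0:ℝ) ≤ 1 + P 2 2),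
      mul_nonneg hdm.le (by linarith : (0:ℝ) ≤ 1 + (P 0 0 + P 1 1 + P 2 2))]
  · have hVt : (Matrix.vecMulVec a a)ᵀ = Matrix.vecMulVec a a := by
      ext i j; simp [Matrix.vecMulVec_apply, mul_comm]
    have h1Q : (1 : Matrix (Fin 3) (Fin 3) ℝ) - Qstar
        = (2 : ℝ) • (1 - U_E * Matrix.vecMulVec a a * U_Eᵀ) := by
      rw [hQstar]; module
    rw [h1Q, Matrix.transpose_smul, Matrix.smul_mul, Matrix.trace_smul]
    have hsub : (1 - U_E * Matrix.vecMulVec a a * U_Eᵀ)ᵀ * K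
        = K - (U_E * Matrix.vecMulVec a a * U_Eᵀ)ᵀ * K := by
      simp [Matrix.transpose_sub, Matrix.sub_mul]
    rw [hsub, Matrix.trace_sub, htrK, key]
    have hM' : U_Eᵀ * ((U_E * Matrix.vecMulVec a a * U_Eᵀ)ᵀ * U_E)
        = Matrix.vecMulVec a a := by
      rw [Matrix.transpose_mul, Matrix.transpose_mul, hVt, Matrix.transpose_transpose]
      simp only [Matrix.mul_assoc]
      rw [hU, Matrix.mul_one, ← Matrix.mul_assoc, hU, Matrix.one_mul]
    rw [hM']
    have hi : ∀ i : Fin 3, Matrix.vecMulVec a a i i * d i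
        = if i = istar then d istar else 0 := by
      intro i
      rw [Matrix.vecMulVec_apply, ha i]
      by_cases h : i = istar <;> simp [Matrix.one_apply, h]
    have hsum : Matrix.vecMulVec a a 0 0 * d 0 + Matrix.vecMulVec a a 1 1 * d 1
        + Matrix.vecMulVec a a 2 2 * d 2 = d istar := by
      rw [hi 0, hi 1, hi 2, ← Fin.sum_univ_three (fun i => if i = istar then d istar else 0)]
      simp
    rw [hsum]
    simp [smul_eq_mul]
end

section
/- Let h > 0, n ∈ ℕ with n ≥ 1, E ∈ ℝ^{3×m}, and let (Ω_i)_{i=0}^N ⊂ ℝ³ and (R_i)_{i=0}^N ⊂ SO(3) satisfy the discrete attitude kinematics R_{i+1} = R_i exp((h/2)(Ω_{i+1} + Ω_i)^×). In the absence of measurement noise, let Ω_iᵐ = Ω_i for all i, and let U_iᵐ = R_iᵀ E whenever i mod n = 0. Define the propagated measurement matrices by Ũ_iᵐ = U_iᵐ if i mod n = 0 and Ũ_iᵐ = exp(−(h/2)(Ω_{i−1}ᵐ + Ω_iᵐ)^×) Ũ_{i−1}ᵐ otherwise. Then Ũ_iᵐ = R_iᵀ E for all i ∈ {0, 1, …,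 N}. -/
open Matrix

/-- The hat (cross-product) map `v ↦ v^×` from `ℝ³` to skew-symmetric 3×3 matrices. -/
def hat (v : Fin 3 → ℝ) : Matrix (Fin 3) (Fin 3) ℝ :=
  !![0, -v 2, v 1; v 2, 0, -v 0; -v 1, v 0, 0]

/-- Under the discrete attitude kinematics
`R_{i+1} = R_i exp((h/2)(Ω_{i+1}+Ω_i)^×)`, with noise-free measurements
`Ω_iᵐ = Ω_i` and `U_iᵐ = R_iᵀ E` whenever `i mod n = 0`, the propagated
measurement matrices `Ũ_iᵐ` (equal to `U_iᵐ` when `i mod n = 0` and to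
`exp(−(h/2)(Ω_{i−1}ᵐ+Ω_iᵐ)^×) Ũ_{i−1}ᵐ` otherwise) satisfy
`Ũ_iᵐ = R_iᵀ E` for all `i ∈ {0,…,N}`. -/
theorem propagated_measurements_noise_free
    (mdim : ℕ) (h : ℝ) (hh : 0 < h) (n : ℕ) (hn : 1 ≤ n) (N : ℕ)
    (E : Matrix (Fin 3) (Fin mdim) ℝ)
    (Ω : ℕ → Fin 3 → ℝ)
    (R : ℕ → Matrix (Fin 3) (Fin 3) ℝ)
    (hSO3 : ∀ i ≤ N, (R i)ᵀ * R i = 1 ∧ (R i).det = 1)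
    (hkin : ∀ i, i < N → R (i + 1) = R i * NormedSpace.exp ((h / 2) • hat (Ω (i + 1) + Ω i)))
    (Ωm : ℕ → Fin 3 → ℝ) (hΩm : ∀ i ≤ N, Ωm i = Ω i)
    (Um : ℕ → Matrix (Fin 3) (Fin mdim) ℝ)
    (hUm : ∀ i ≤ N, i % n = 0 → Um i = (R i)ᵀ * E)
    (Ut : ℕ → Matrix (Fin 3) (Fin mdim) ℝ)
    (hUt0 : ∀ i ≤ N, i % n = 0 → Ut i = Um i)
    (hUt1 : ∀ i ≤ N, 0 < i → i % n ≠ 0 →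
      Ut i = NormedSpace.exp (-((h / 2) • hat (Ωm (i - 1) + Ωm i))) * Ut (i - 1)) :
    ∀ i ≤ N, Ut i = (R i)ᵀ * E := by
  intro i hi
  induction i with
  | zero =>
    rw [hUt0 0 hi (Nat.zero_mod n), hUm 0 hi (Nat.zero_mod n)]
  | succ k ih =>
    have hk : k ≤ N := Nat.le_of_succ_le hi
    by_cases hm : (k+1) % n = 0
    · rw [hUt0 _ hi hm, hUm _ hi hm]
    · have hrec := hUt1 (k+1) hi (Nat.succ_pos k) hm
      simp only [Nat.add_sub_cancel] at hrec
      rw [hrec, ih hk, hΩm k hk, hΩm (k+1) hi]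
      set A : Matrix (Fin 3) (Fin 3) ℝ := (h / 2) • hat (Ω (k + 1) + Ω k) with hA
      have hAT : Aᵀ = -A := by
        ext i j
        fin_cases i <;> fin_cases j <;>
          simp [hA, hat, Matrix.smul_apply, Matrix.transpose_apply] <;> ring
      have hR := hkin k (Nat.lt_of_succ_le hi)
      rw [hR, Matrix.transpose_mul, ← Matrix.exp_transpose, hAT, Matrix.mul_assoc,
        add_comm (Ω k) (Ω (k+1))]
end

section
/- Let m > 0, l > 0, k_p > 0, h > 0 be real numbers with l ≠ m, let ω, s ∈ ℝ³, and define the filter update ω' := (1/(m+l))[(m−l)ω + k_p h s]. Then m(ω' − ω) − k_p h s = −l(ω' + ω), and consequently the discrete Lyapunov difference satisfies (1/2)(ω' + ω)ᵀ( m(ω' − ω) − k_p h s ) = −(l/2)‖ω' + ω‖² ≤ 0, with equality if and only if ω' + ω = 0. -/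
open RealInnerProductSpace

/-- For the filter update `ω' = (1/(m+l))[(m−l)ω + k_p h s]` with
`m, l, k_p, h > 0` and `l ≠ m`, one has `m(ω' − ω) − k_p h s = −l(ω' + ω)`, hence
the discrete Lyapunov difference satisfies
`(1/2)(ω'+ω)ᵀ(m(ω'−ω) − k_p h s) = −(l/2)‖ω'+ω‖² ≤ 0`, with equality iff
`ω' + ω = 0`. -/
theorem filter_lyapunov_difference
    (m l kp h : ℝ) (hm : 0 < m) (hl : 0 < l) (hkp : 0 < kp) (hh : 0 < h) (hlm : l ≠ m)
    (ω s ω' : EuclideanSpace ℝ (Fin 3))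
    (hω' : ω' = (1 / (m + l)) • ((m - l) • ω + (kp * h) • s)) :
    m • (ω' - ω) - (kp * h) • s = -(l • (ω' + ω)) ∧
    (1 / 2) * ⟪ω' + ω, m • (ω' - ω) - (kp * h) • s⟫ = -(l / 2) * ‖ω' + ω‖ ^ 2 ∧
    -(l / 2) * ‖ω' + ω‖ ^ 2 ≤ 0 ∧
    (-(l / 2) * ‖ω' + ω‖ ^ 2 = 0 ↔ ω' + ω = 0) := by
  have hml : m + l ≠ 0 := by positivity
  have key : m • (ω' - ω) - (kp * h) • s = -(l • (ω' + ω)) := by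
    subst hω'
    have : ∀ x : EuclideanSpace ℝ (Fin 3), (m + l) • x = (m + l) • x := fun _ => rfl
    match_scalars <;> field_simp <;> ring
  refine ⟨key, ?_, ?_, ?_⟩
  · rw [key]
    rw [inner_neg_right, inner_smul_right, real_inner_self_eq_norm_sq]
    ring
  · have : 0 ≤ ‖ω' + ω‖ ^ 2 := sq_nonneg _
    nlinarith
  · constructor
    · intro hz
      have : ‖ω' + ω‖ ^ 2 = 0 := by
        have hl2 : -(l/2) ≠ 0 := ne_of_lt (by linarith)
        exact (mul_eq_zero.mp hz).resolve_left hl2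
      simpa [← norm_eq_zero] using pow_eq_zero_iff (n := 2) (by norm_num) |>.mp this
    · intro hz; rw [hz]; simp
end
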